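/- arXiv:1704.08574 — 4 statements merged into one kernel-verified Lean document; each statement's English description precedes it below -/
import Mathlib

section
/- Let φ be a finite signed measure on ℝ concentrated on (0,∞) with |φ|((0,∞)) < 1 and let θ ∈ L²(ℝ) vanish on (−∞,0). Then: (1) for each n ∈ ℕ₀ the function θ∗φ^{∗n}(t) = ∫ θ(t−u) dφ^{∗n}(u) belongs to L²(ℝ) with ‖θ∗φ^{∗n}‖_{L²} ≤ ‖θ‖_{L²} · (|φ|((0,∞)))^n; (2) the series ψ := Σ_{n=0}^∞ θ∗φ^{∗n} converges in L²(ℝ); and (3) ψ(t) = 0 for Lebesgue-almost all t < 0. -/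
open MeasureTheory Complex Set Filter
open scoped ENNReal Topology

/-- The `n`-fold convolution power of the finite signed measure `φ = φp - φm`, represented
as a pair (positive part, negative part): `φ^{∗0} = δ₀` and `φ^{∗(n+1)} = φ^{∗n} ∗ φ`. -/
noncomputable def convPow (φp φm : Measure ℝ) : ℕ → Measure ℝ × Measure ℝ
  | 0 => (Measure.dirac 0, 0)
  | n + 1 =>
      ((convPow φp φm n).1.conv φp + (convPow φp φm n).2.conv φm,
       (convPow φp φm n).1.conv φm + (convPow φp φm n).2.conv φp)

/-- `θ ∗ μ (t) = ∫ θ(t-u) dμ(u)` for the signed measure `μ = μ.1 - μ.2`. -/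
noncomputable def convKernel (θ : ℝ → ℝ) (μ : Measure ℝ × Measure ℝ) (t : ℝ) : ℝ :=
  (∫ u : ℝ, θ (t - u) ∂μ.1) - ∫ u : ℝ, θ (t - u) ∂μ.2

lemma aux_conv_univ (μ ν : Measure ℝ) [IsFiniteMeasure μ] [IsFiniteMeasure ν] :
    (μ.conv ν) Set.univ = μ Set.univ * ν Set.univ := by
  rw [Measure.conv, Measure.map_apply (by fun_prop) MeasurableSet.univ, Set.preimage_univ,
    ← Set.univ_prod_univ, Measure.prod_prod]

lemma aux_conv_Iio (μ ν : Measure ℝ) [IsFiniteMeasure μ] [IsFiniteMeasure ν]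
    (hμ : μ (Iio 0) = 0) (hν : ν (Iio 0) = 0) : (μ.conv ν) (Iio 0) = 0 := by
  rw [Measure.conv, Measure.map_apply (by fun_prop) measurableSet_Iio]
  refine le_antisymm ?_ zero_le
  calc (μ.prod ν) ((fun x : ℝ × ℝ => x.1 + x.2) ⁻¹' Iio 0)
      ≤ (μ.prod ν) (Iio 0 ×ˢ univ ∪ univ ×ˢ Iio 0) := by
        apply measure_mono
        rintro ⟨u, v⟩ h
        simp only [Set.mem_preimage, Set.mem_Iio] at h
        by_contra hc
        simp only [Set.mem_union, Set.mem_prod, Set.mem_univ, Set.mem_Iio, and_true, true_and,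
          not_or, not_lt] at hc
        linarith [hc.1, hc.2]
    _ ≤ (μ.prod ν) (Iio 0 ×ˢ univ) + (μ.prod ν) (univ ×ˢ Iio 0) := measure_union_le _ _
    _ = 0 := by rw [Measure.prod_prod, Measure.prod_prod, hμ, hν]; simp

lemma aux_mink (μ : Measure ℝ) [IsFiniteMeasure μ] (θ' : ℝ → ℝ) (hm : Measurable θ') :
    eLpNorm (fun t => ∫ u, θ' (t - u) ∂μ) 2 volume ≤ eLpNorm θ' 2 volume * μ univ := by
  set F : ℝ → ℝ≥0∞ := fun x => (‖θ' x‖₊ : ℝ≥0∞) with hF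
  have hFm : Measurable F := hm.enorm
  set I : ℝ≥0∞ := ∫⁻ x, F x ^ (2 : ℝ) with hI
  have hθ'norm : eLpNorm θ' 2 volume = I ^ (1 / (2:ℝ)) := by
    rw [eLpNorm_eq_lintegral_rpow_enorm_toReal (by norm_num) (by norm_num), hI, hF]
    simp only [ENNReal.toReal_ofNat]
    rfl
  have htrans : ∀ u : ℝ, (∫⁻ t, F (t - u) ^ (2:ℝ)) = I := fun u =>
    lintegral_sub_right_eq_self (fun x => F x ^ (2:ℝ)) u
  have hm1 : ∀ t : ℝ, AEMeasurable (fun u : ℝ => F (t - u)) μ :=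
    fun t => (hFm.comp (by fun_prop)).aemeasurable
  have hCS : ∀ u v : ℝ, (∫⁻ t, F (t - u) * F (t - v)) ≤ I := by
    intro u v
    calc (∫⁻ t, F (t - u) * F (t - v))
        ≤ (∫⁻ t, F (t - u) ^ (2:ℝ)) ^ (1/(2:ℝ)) * (∫⁻ t, F (t - v) ^ (2:ℝ)) ^ (1/(2:ℝ)) :=
          ENNReal.lintegral_mul_le_Lp_mul_Lq volume ⟨by norm_num, by norm_num, by norm_num⟩
            ((hFm.comp (measurable_sub_const u)).aemeasurable)
            ((hFm.comp (measurable_sub_const v)).aemeasurable)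
      _ = I := by
          rw [htrans, htrans, ← sq, ← ENNReal.rpow_two, ← ENNReal.rpow_mul]
          norm_num
  have hkey : (∫⁻ t, (∫⁻ u, F (t - u) ∂μ) ^ (2:ℝ)) ≤ I * (μ univ * μ univ) := by
    have hsq : ∀ t : ℝ, (∫⁻ u, F (t - u) ∂μ) ^ (2:ℝ)
        = ∫⁻ p : ℝ × ℝ, F (t - p.1) * F (t - p.2) ∂(μ.prod μ) := by
      intro t
      rw [lintegral_prod _ (by fun_prop)]
      rw [ENNReal.rpow_two, sq, ← lintegral_mul_const'' _ (hm1 t)]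
      exact lintegral_congr fun u => (lintegral_const_mul'' (F (t - u)) (hm1 t)).symm
    calc (∫⁻ t, (∫⁻ u, F (t - u) ∂μ) ^ (2:ℝ))
        = ∫⁻ t, ∫⁻ p : ℝ × ℝ, F (t - p.1) * F (t - p.2) ∂(μ.prod μ) := by
          simp_rw [hsq]
      _ = ∫⁻ p : ℝ × ℝ, (∫⁻ t, F (t - p.1) * F (t - p.2)) ∂(μ.prod μ) := by
          rw [lintegral_lintegral_swap (by fun_prop)]
      _ ≤ ∫⁻ _ : ℝ × ℝ, I ∂(μ.prod μ) := lintegral_mono fun p => hCS p.1 p.2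
      _ = I * (μ univ * μ univ) := by
          rw [lintegral_const, ← Set.univ_prod_univ, Measure.prod_prod]
  calc eLpNorm (fun t => ∫ u, θ' (t - u) ∂μ) 2 volume
      = (∫⁻ t, (‖∫ u, θ' (t - u) ∂μ‖₊ : ℝ≥0∞) ^ (2:ℝ)) ^ (1/(2:ℝ)) := by
        rw [eLpNorm_eq_lintegral_rpow_enorm_toReal (by norm_num) (by norm_num)]; norm_num; rfl
    _ ≤ (∫⁻ t, (∫⁻ u, F (t - u) ∂μ) ^ (2:ℝ)) ^ (1/(2:ℝ)) := by
        apply ENNReal.rpow_le_rpow _ (by norm_num)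
        apply lintegral_mono fun t => ?_
        exact ENNReal.rpow_le_rpow (enorm_integral_le_lintegral_enorm _) (by norm_num)
    _ ≤ (I * (μ univ * μ univ)) ^ (1/(2:ℝ)) := ENNReal.rpow_le_rpow hkey (by norm_num)
    _ = I ^ (1/(2:ℝ)) * μ univ := by
        rw [ENNReal.mul_rpow_of_nonneg _ _ (by norm_num)]
        congr 1
        rw [← sq, ← ENNReal.rpow_two, ← ENNReal.rpow_mul]
        norm_num
    _ = eLpNorm θ' 2 volume * μ univ := by rw [hθ'norm]

lemma aux_meas_conv (μ : Measure ℝ) [IsFiniteMeasure μ] (θ' : ℝ → ℝ)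
    (hm : StronglyMeasurable θ') :
    StronglyMeasurable (fun t => ∫ u, θ' (t - u) ∂μ) := by
  have : StronglyMeasurable (fun p : ℝ × ℝ => θ' (p.1 - p.2)) :=
    hm.comp_measurable (by fun_prop)
  exact this.integral_prod_right'

lemma aux_congr_conv (μ : Measure ℝ) [IsFiniteMeasure μ] (θ θ' : ℝ → ℝ)
    (h : θ =ᵐ[volume] θ') :
    (fun t => ∫ u, θ (t - u) ∂μ) =ᵐ[volume] (fun t => ∫ u, θ' (t - u) ∂μ) := by
  obtain ⟨N, hsub, hNmeas, hN0⟩ :=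
    exists_measurable_superset_of_null (h : volume {x | θ x ≠ θ' x} = 0)
  have hzero : ∫⁻ t, μ ((fun u => t - u) ⁻¹' N) ∂volume = 0 := by
    have h1 : ∀ t : ℝ, μ ((fun u => t - u) ⁻¹' N) = ∫⁻ u, N.indicator 1 (t - u) ∂μ := by
      intro t
      rw [← lintegral_indicator_one (hNmeas.preimage (by fun_prop))]
      rfl
    calc ∫⁻ t, μ ((fun u => t - u) ⁻¹' N) ∂volume
        = ∫⁻ t, ∫⁻ u, N.indicator 1 (t - u) ∂μ ∂volume := by simp_rw [h1]
      _ = ∫⁻ u, (∫⁻ t, N.indicator 1 (t - u) ∂volume) ∂μ := by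
          refine lintegral_lintegral_swap ?_
          exact ((measurable_one.indicator hNmeas).comp (by fun_prop)).aemeasurable
      _ = ∫⁻ u, (∫⁻ t, N.indicator 1 t ∂volume) ∂μ := by
          refine lintegral_congr fun u => lintegral_sub_right_eq_self _ u
      _ = 0 := by
          rw [lintegral_indicator_one hNmeas, hN0]
          simp
  have hae : ∀ᵐ t ∂volume, μ ((fun u => t - u) ⁻¹' N) = 0 := by
    have := (lintegral_eq_zero_iff' ?_).mp hzero
    · filter_upwards [this] with t ht using ht
    · exact (measurable_measure_prodMk_left
        (show MeasurableSet {p : ℝ × ℝ | p.1 - p.2 ∈ N} from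
          hNmeas.preimage (by fun_prop))).aemeasurable
  filter_upwards [hae] with t ht
  refine integral_congr_ae ?_
  have : ∀ᵐ u ∂μ, u ∉ (fun u => t - u) ⁻¹' N := by
    rw [ae_iff]
    simpa [Set.preimage] using ht
  filter_upwards [this] with u hu
  have : t - u ∉ {x | θ x ≠ θ' x} := fun hc => hu (hsub hc)
  simpa using this

lemma aux_single (μ : Measure ℝ) [IsFiniteMeasure μ] (θ : ℝ → ℝ) (hθ : MemLp θ 2 volume) :
    AEStronglyMeasurable (fun t => ∫ u, θ (t - u) ∂μ) volume ∧
      eLpNorm (fun t => ∫ u, θ (t - u) ∂μ) 2 volume ≤ eLpNorm θ 2 volume * μ univ := by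
  set θ' := hθ.1.mk θ with hθ'
  have hsm := hθ.1.stronglyMeasurable_mk
  have hae := hθ.1.ae_eq_mk
  have hcongr := aux_congr_conv μ θ θ' hae
  constructor
  · exact (aux_meas_conv μ θ' hsm).aestronglyMeasurable.congr hcongr.symm
  · rw [eLpNorm_congr_ae hcongr, eLpNorm_congr_ae hae]
    exact aux_mink μ θ' hsm.measurable

/-- Theorem 3.1, construction of the kernel. Let `φ` be a finite signed
measure on `(0,∞)` with `|φ|((0,∞)) < 1` and `θ ∈ L²` vanishing on `(-∞,0)`. Then each
`θ ∗ φ^{∗n} ∈ L²` with `‖θ ∗ φ^{∗n}‖₂ ≤ ‖θ‖₂ |φ|((0,∞))ⁿ`, the series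
`ψ = Σₙ θ ∗ φ^{∗n}` converges in `L²`, and `ψ = 0` a.e. on `(-∞,0)`. -/
theorem statement10
    (φp φm : Measure ℝ) [IsFiniteMeasure φp] [IsFiniteMeasure φm]
    (hsing : φp ⟂ₘ φm) (hconcp : φp (Set.Iic 0) = 0) (hconcm : φm (Set.Iic 0) = 0)
    (hcontr : φp Set.univ + φm Set.univ < 1)
    (θ : ℝ → ℝ) (hθ : MemLp θ 2 volume) (hθ0 : ∀ t : ℝ, t < 0 → θ t = 0) :
    (∀ n : ℕ,
      MemLp (convKernel θ (convPow φp φm n)) 2 volume ∧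
      eLpNorm (convKernel θ (convPow φp φm n)) 2 volume ≤
        eLpNorm θ 2 volume * (φp Set.univ + φm Set.univ) ^ n) ∧
    ∃ ψ : ℝ → ℝ, MemLp ψ 2 volume ∧
      Tendsto
        (fun N : ℕ =>
          eLpNorm
            (fun t : ℝ =>
              (∑ n ∈ Finset.range N, convKernel θ (convPow φp φm n) t) - ψ t) 2 volume)
        atTop (𝓝 0) ∧
      (∀ᵐ t : ℝ ∂volume, t < 0 → ψ t = 0) := by
  set a : ℝ≥0∞ := φp Set.univ + φm Set.univ with ha
  have ha_top : a ≠ ⊤ := by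
    finiteness
  -- finiteness of convolution powers
  have hfin : ∀ n : ℕ, IsFiniteMeasure (convPow φp φm n).1 ∧
      IsFiniteMeasure (convPow φp φm n).2 := by
    intro n
    induction n with
    | zero => exact ⟨by simp only [convPow]; infer_instance, by simp only [convPow]; infer_instance⟩
    | succ n ih =>
      haveI := ih.1; haveI := ih.2
      exact ⟨by simp only [convPow]; infer_instance, by simp only [convPow]; infer_instance⟩
  -- total mass
  have hmass : ∀ n : ℕ, (convPow φp φm n).1 Set.univ + (convPow φp φm n).2 Set.univ = a ^ n := by
    intro n
    induction n with
    | zero => simp [convPow]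
    | succ n ih =>
      haveI := (hfin n).1; haveI := (hfin n).2
      simp only [convPow, Measure.add_apply, aux_conv_univ]
      rw [pow_succ, ← ih]
      ring
  -- concentration on [0, ∞)
  have hp0 : φp (Iio 0) = 0 := measure_mono_null Iio_subset_Iic_self hconcp
  have hm0 : φm (Iio 0) = 0 := measure_mono_null Iio_subset_Iic_self hconcm
  have hconc : ∀ n : ℕ, (convPow φp φm n).1 (Iio 0) = 0 ∧ (convPow φp φm n).2 (Iio 0) = 0 := by
    intro n
    induction n with
    | zero =>
      constructor
      · simp only [convPow]
        rw [Measure.dirac_apply' _ measurableSet_Iio]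
        simp
      · simp [convPow]
    | succ n ih =>
      haveI := (hfin n).1; haveI := (hfin n).2
      constructor
      · simp only [convPow, Measure.add_apply]
        rw [aux_conv_Iio _ _ ih.1 hp0, aux_conv_Iio _ _ ih.2 hm0]
        simp
      · simp only [convPow, Measure.add_apply]
        rw [aux_conv_Iio _ _ ih.1 hm0, aux_conv_Iio _ _ ih.2 hp0]
        simp
  -- pointwise vanishing on t < 0
  have hvanish : ∀ n : ℕ, ∀ t : ℝ, t < 0 → convKernel θ (convPow φp φm n) t = 0 := by
    intro n t ht
    have key : ∀ (μ : Measure ℝ), μ (Iio 0) = 0 → (∫ u, θ (t - u) ∂μ) = 0 := by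
      intro μ hμ
      have : ∀ᵐ u ∂μ, θ (t - u) = 0 := by
        have hsub : {u : ℝ | ¬ θ (t - u) = 0} ⊆ Iio 0 := by
          intro u hu
          simp only [Set.mem_setOf_eq] at hu
          by_contra hc
          simp only [Set.mem_Iio, not_lt] at hc
          exact hu (hθ0 _ (by linarith))
        exact measure_mono_null hsub hμ
      rw [integral_congr_ae this, integral_zero]
    unfold convKernel
    rw [key _ (hconc n).1, key _ (hconc n).2, sub_zero]
  -- part (1)
  have hθ2top : eLpNorm θ 2 volume ≠ ⊤ := hθ.2.ne
  have hpart1 : ∀ n : ℕ, MemLp (convKernel θ (convPow φp φm n)) 2 volume ∧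
      eLpNorm (convKernel θ (convPow φp φm n)) 2 volume ≤ eLpNorm θ 2 volume * a ^ n := by
    intro n
    haveI := (hfin n).1; haveI := (hfin n).2
    obtain ⟨hmeas1, hbd1⟩ := aux_single (convPow φp φm n).1 θ hθ
    obtain ⟨hmeas2, hbd2⟩ := aux_single (convPow φp φm n).2 θ hθ
    have hb1 : eLpNorm (fun t => ∫ u, θ (t - u) ∂(convPow φp φm n).1) 2 volume < ⊤ :=
      lt_of_le_of_lt hbd1 (by finiteness)
    have hb2 : eLpNorm (fun t => ∫ u, θ (t - u) ∂(convPow φp φm n).2) 2 volume < ⊤ :=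
      lt_of_le_of_lt hbd2 (by finiteness)
    have hml1 : MemLp (fun t => ∫ u, θ (t - u) ∂(convPow φp φm n).1) 2 volume := ⟨hmeas1, hb1⟩
    have hml2 : MemLp (fun t => ∫ u, θ (t - u) ∂(convPow φp φm n).2) 2 volume := ⟨hmeas2, hb2⟩
    refine ⟨hml1.sub hml2, ?_⟩
    calc eLpNorm (convKernel θ (convPow φp φm n)) 2 volume
        ≤ eLpNorm (fun t => ∫ u, θ (t - u) ∂(convPow φp φm n).1) 2 volume
          + eLpNorm (fun t => ∫ u, θ (t - u) ∂(convPow φp φm n).2) 2 volume :=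
          eLpNorm_sub_le hmeas1 hmeas2 (by norm_num)
      _ ≤ eLpNorm θ 2 volume * (convPow φp φm n).1 Set.univ
          + eLpNorm θ 2 volume * (convPow φp φm n).2 Set.univ := add_le_add hbd1 hbd2
      _ = eLpNorm θ 2 volume * a ^ n := by rw [← mul_add, hmass n]
  refine ⟨hpart1, ?_⟩
  -- part (2): construct the limit in L²
  set f : ℕ → Lp ℝ 2 (volume : Measure ℝ) := fun n => ((hpart1 n).1).toLp _ with hf
  have hnorm_le : ∀ n : ℕ, ‖f n‖ ≤ (eLpNorm θ 2 volume).toReal * a.toReal ^ n := by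
    intro n
    rw [hf]
    rw [Lp.norm_toLp]
    calc (eLpNorm (convKernel θ (convPow φp φm n)) 2 volume).toReal
        ≤ (eLpNorm θ 2 volume * a ^ n).toReal :=
          ENNReal.toReal_mono (ENNReal.mul_ne_top hθ2top (ENNReal.pow_ne_top ha_top)) (hpart1 n).2
      _ = (eLpNorm θ 2 volume).toReal * a.toReal ^ n := by
          rw [ENNReal.toReal_mul, ENNReal.toReal_pow]
  have hr : a.toReal < 1 := by
    have := (ENNReal.toReal_lt_toReal ha_top ENNReal.one_ne_top).mpr hcontr
    simpa using this
  have hsummable : Summable f := by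
    refine Summable.of_norm ?_
    refine Summable.of_nonneg_of_le (fun n => norm_nonneg _) hnorm_le ?_
    exact (summable_geometric_of_lt_one (ENNReal.toReal_nonneg) hr).mul_left _
  set Ψ : Lp ℝ 2 (volume : Measure ℝ) := ∑' n, f n with hΨ
  have hhsum : HasSum f Ψ := hsummable.hasSum
  have htendsto : Tendsto (fun N : ℕ => ∑ n ∈ Finset.range N, f n) atTop (𝓝 Ψ) :=
    hhsum.tendsto_sum_nat
  set ψ : ℝ → ℝ := ⇑Ψ with hψ
  have hcoe : ∀ N : ℕ,
      (fun t => (∑ n ∈ Finset.range N, convKernel θ (convPow φp φm n) t) - ψ t)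
        =ᵐ[volume] ⇑((∑ n ∈ Finset.range N, f n) - Ψ) := by
    intro N
    have h1 : ⇑(∑ n ∈ Finset.range N, f n) =ᵐ[volume]
        fun t => ∑ n ∈ Finset.range N, convKernel θ (convPow φp φm n) t := by
      induction N with
      | zero =>
        simp only [Finset.range_zero, Finset.sum_empty]
        filter_upwards [Lp.coeFn_zero ℝ 2 (volume : Measure ℝ)] with t ht
        simpa using ht
      | succ N ih =>
        rw [Finset.sum_range_succ]
        filter_upwards [ih, Lp.coeFn_add (∑ n ∈ Finset.range N, f n) (f N),
          (hpart1 N).1.coeFn_toLp] with t iht haddt hNt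
        simp only [Finset.sum_range_succ, haddt, Pi.add_apply, iht, hNt]
        exact congrArg (fun x => ∑ n ∈ Finset.range N, convKernel θ (convPow φp φm n) t + x) hNt
    have h2 := Lp.coeFn_sub (∑ n ∈ Finset.range N, f n) Ψ
    filter_upwards [h1, h2] with t h1t h2t
    rw [h2t, Pi.sub_apply, h1t]
  have heq : ∀ N : ℕ,
      eLpNorm
        (fun t : ℝ =>
          (∑ n ∈ Finset.range N, convKernel θ (convPow φp φm n) t) - ψ t) 2 volume
      = (‖(∑ n ∈ Finset.range N, f n) - Ψ‖₊ : ℝ≥0∞) := by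
    intro N
    rw [eLpNorm_congr_ae (hcoe N), Lp.nnnorm_def,
      ENNReal.coe_toNNReal (Lp.eLpNorm_ne_top _)]
  have htz : Tendsto
      (fun N : ℕ =>
        eLpNorm
          (fun t : ℝ =>
            (∑ n ∈ Finset.range N, convKernel θ (convPow φp φm n) t) - ψ t) 2 volume)
      atTop (𝓝 0) := by
    have hnorm0 : Tendsto (fun N : ℕ => ‖(∑ n ∈ Finset.range N, f n) - Ψ‖) atTop (𝓝 0) :=
      tendsto_iff_norm_sub_tendsto_zero.mp htendsto
    have hnn0 : Tendsto (fun N : ℕ => ‖(∑ n ∈ Finset.range N, f n) - Ψ‖₊) atTop (𝓝 0) := by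
      rw [← NNReal.tendsto_coe]
      simpa [coe_nnnorm] using hnorm0
    have hnn : Tendsto (fun N : ℕ => (‖(∑ n ∈ Finset.range N, f n) - Ψ‖₊ : ℝ≥0∞))
        atTop (𝓝 0) := by
      rw [← ENNReal.coe_zero]
      exact ENNReal.tendsto_coe.mpr hnn0
    exact hnn.congr fun N => (heq N).symm
  refine ⟨ψ, Lp.memLp Ψ, htz, ?_⟩
  have hgm : ∀ N : ℕ, AEStronglyMeasurable
      (fun t => ∑ n ∈ Finset.range N, convKernel θ (convPow φp φm n) t) volume := by
    intro N
    exact ((memLp_finset_sum' (Finset.range N) (fun i _ => (hpart1 i).1)).1).congr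
      (Filter.Eventually.of_forall fun t => Finset.sum_apply t _ _)
  have hTIM : TendstoInMeasure volume
      (fun N t => ∑ n ∈ Finset.range N, convKernel θ (convPow φp φm n) t) atTop ψ := by
    exact tendstoInMeasure_of_tendsto_eLpNorm
      (f := fun N t => ∑ n ∈ Finset.range N, convKernel θ (convPow φp φm n) t)
      (g := ψ) (two_ne_zero) hgm (Lp.memLp Ψ).1 htz
  obtain ⟨ns, hns, haecv⟩ := hTIM.exists_seq_tendsto_ae
  filter_upwards [haecv] with t ht htneg
  have hzero : ∀ i : ℕ,
      (∑ n ∈ Finset.range (ns i), convKernel θ (convPow φp φm n) t) = (0 : ℝ) :=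
    fun i => Finset.sum_eq_zero fun n _ => hvanish n t htneg
  have h0 : Tendsto (fun _ : ℕ => (0 : ℝ)) atTop (𝓝 (ψ t)) := ht.congr hzero
  exact tendsto_nhds_unique h0 tendsto_const_nhds
end

section
/- Let φ be a finite signed measure on ℝ concentrated on (0,∞) with |φ|((0,∞)) < 1 and let θ ∈ L²(ℝ) vanish on (−∞,0). Let ψ ∈ L²(ℝ) be the L²-limit of the series Σ_{n=0}^∞ θ∗φ^{∗n}. Then ψ satisfies the fixed-point equation ψ(t) = ∫_{(0,∞)} ψ(t−u) dφ(u) + θ(t) for Lebesgue-almost all t ∈ ℝ. -/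
open MeasureTheory Complex Set Filter
open scoped ENNReal Topology

namespace Stmt11

noncomputable def T (μ : Measure ℝ) (f : ℝ → ℝ) (t : ℝ) : ℝ := ∫ u, f (t - u) ∂μ

lemma aesm_prod {f : ℝ → ℝ} (hf : AEStronglyMeasurable f volume) (μ : Measure ℝ) [SFinite μ] :
    AEStronglyMeasurable (fun p : ℝ × ℝ => f (p.1 - p.2)) ((volume : Measure ℝ).prod μ) :=
  hf.comp_quasiMeasurePreserving (quasiMeasurePreserving_sub_of_right_invariant volume μ)

lemma ae_sections {f : ℝ → ℝ} (hf : MemLp f 2 volume) (μ : Measure ℝ) [IsFiniteMeasure μ] :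
    ∀ᵐ t ∂(volume : Measure ℝ), Integrable (fun u => f (t - u)) μ ∧
      ‖∫ u, f (t - u) ∂μ‖₊ ^ (2:ℝ) ≤ μ Set.univ * ∫⁻ u, (‖f (t - u)‖₊ : ℝ≥0∞) ^ (2:ℝ) ∂μ := by
  have hprod := aesm_prod hf.1 μ
  have hG : AEMeasurable (fun p : ℝ × ℝ => (‖f (p.1 - p.2)‖₊ : ℝ≥0∞) ^ (2:ℝ))
      ((volume : Measure ℝ).prod μ) := hprod.enorm.pow_const _
  -- the function Φ
  set Φ : ℝ → ℝ≥0∞ := fun t => ∫⁻ u, (‖f (t - u)‖₊ : ℝ≥0∞) ^ (2:ℝ) ∂μ with hΦ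
  have hΦmeas : AEMeasurable Φ volume := by
    have hm : Measurable fun t : ℝ => ∫⁻ u, hG.mk _ (t, u) ∂μ :=
      hG.measurable_mk.lintegral_prod_right'
    refine hm.aemeasurable.congr ?_
    filter_upwards [Measure.ae_ae_of_ae_prod hG.ae_eq_mk] with t ht
    exact (lintegral_congr_ae ht).symm
  have hL : ∫⁻ t, Φ t ∂volume = μ Set.univ * ∫⁻ t, (‖f t‖₊ : ℝ≥0∞) ^ (2:ℝ) ∂volume := by
    rw [hΦ]
    rw [← MeasureTheory.lintegral_prod _ hG, MeasureTheory.lintegral_prod_symm _ hG]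
    simp_rw [lintegral_sub_right_eq_self (fun t => (‖f t‖₊ : ℝ≥0∞) ^ (2:ℝ)) _]
    rw [lintegral_const, mul_comm]
  have hLf : ∫⁻ t, (‖f t‖₊ : ℝ≥0∞) ^ (2:ℝ) ∂volume < ∞ := by
    have h := hf.2
    rw [eLpNorm_eq_lintegral_rpow_enorm_toReal (by norm_num) (by norm_num)] at h
    simpa [ENNReal.toReal_ofNat, enorm_eq_nnnorm] using
      ((ENNReal.rpow_lt_top_iff_of_pos (by norm_num)).1 h)
  have hΦfin : ∀ᵐ t ∂(volume : Measure ℝ), Φ t < ∞ := by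
    refine ae_lt_top' hΦmeas ?_
    rw [hL]
    exact (ENNReal.mul_lt_top (measure_lt_top μ _) hLf).ne
  have hsec : ∀ᵐ t ∂(volume : Measure ℝ), AEStronglyMeasurable (fun u => f (t - u)) μ :=
    hprod.prodMk_left
  filter_upwards [hΦfin, hsec] with t hΦt hsect
  have hCS : ∫⁻ u, (‖f (t - u)‖₊ : ℝ≥0∞) ∂μ ≤ (Φ t) ^ ((1:ℝ)/2) * (μ Set.univ) ^ ((1:ℝ)/2) := by
    have := ENNReal.lintegral_mul_le_Lp_mul_Lq μ
      ((Real.holderConjugate_iff_eq_conjExponent (p := 2) (q := 2) one_lt_two).2 (by norm_num)) (f := fun u => (‖f (t - u)‖₊ : ℝ≥0∞))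
      (g := fun _ => 1) hsect.enorm aemeasurable_const
    simpa [hΦ] using this
  constructor
  · refine ⟨hsect, ?_⟩
    show (∫⁻ u, (‖f (t - u)‖₊ : ℝ≥0∞) ∂μ) < ∞
    calc ∫⁻ u, (‖f (t - u)‖₊ : ℝ≥0∞) ∂μ
        ≤ ∫⁻ u, (1 + (‖f (t - u)‖₊ : ℝ≥0∞) ^ (2:ℝ)) ∂μ := by
          refine lintegral_mono fun u => ?_
          rcases le_total ((‖f (t - u)‖₊ : ℝ≥0∞)) 1 with h | h
          · exact le_add_right h
          · calc (‖f (t - u)‖₊ : ℝ≥0∞) = (‖f (t - u)‖₊ : ℝ≥0∞) ^ (1:ℝ) := by simp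
              _ ≤ (‖f (t - u)‖₊ : ℝ≥0∞) ^ (2:ℝ) :=
                ENNReal.rpow_le_rpow_of_exponent_le h (by norm_num)
              _ ≤ _ := le_add_self
      _ = μ Set.univ + Φ t := by rw [lintegral_add_left measurable_const, lintegral_one]
      _ < ∞ := ENNReal.add_lt_top.2 ⟨measure_lt_top μ _, hΦt⟩
  · calc (‖∫ u, f (t - u) ∂μ‖₊ : ℝ≥0∞) ^ (2:ℝ)
        ≤ (∫⁻ u, (‖f (t - u)‖₊ : ℝ≥0∞) ∂μ) ^ (2:ℝ) :=
          ENNReal.rpow_le_rpow (enorm_integral_le_lintegral_enorm _) (by norm_num)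
      _ ≤ ((Φ t) ^ ((1:ℝ)/2) * (μ Set.univ) ^ ((1:ℝ)/2)) ^ (2:ℝ) :=
          ENNReal.rpow_le_rpow hCS (by norm_num)
      _ = μ Set.univ * Φ t := by
          rw [ENNReal.mul_rpow_of_nonneg _ _ (by norm_num), ← ENNReal.rpow_mul,
            ← ENNReal.rpow_mul]
          norm_num [mul_comm]

lemma ae_integrable {f : ℝ → ℝ} (hf : MemLp f 2 volume) (μ : Measure ℝ) [IsFiniteMeasure μ] :
    ∀ᵐ t ∂(volume : Measure ℝ), Integrable (fun u => f (t - u)) μ := by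
  filter_upwards [ae_sections hf μ] with t ht using ht.1

lemma aesm_T {f : ℝ → ℝ} (hf : MemLp f 2 volume) (μ : Measure ℝ) [IsFiniteMeasure μ] :
    AEStronglyMeasurable (T μ f) volume :=
  (aesm_prod hf.1 μ).integral_prod_right'

lemma eLpNorm_T_le {f : ℝ → ℝ} (hf : MemLp f 2 volume) (μ : Measure ℝ) [IsFiniteMeasure μ] :
    eLpNorm (T μ f) 2 volume ≤ μ Set.univ * eLpNorm f 2 volume := by
  have hprod := aesm_prod hf.1 μ
  have hG : AEMeasurable (fun p : ℝ × ℝ => (‖f (p.1 - p.2)‖₊ : ℝ≥0∞) ^ (2:ℝ))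
      ((volume : Measure ℝ).prod μ) := hprod.enorm.pow_const _
  have hL : ∫⁻ t, (∫⁻ u, (‖f (t - u)‖₊ : ℝ≥0∞) ^ (2:ℝ) ∂μ) ∂volume
      = μ Set.univ * ∫⁻ t, (‖f t‖₊ : ℝ≥0∞) ^ (2:ℝ) ∂volume := by
    rw [← MeasureTheory.lintegral_prod _ hG, MeasureTheory.lintegral_prod_symm _ hG]
    simp_rw [lintegral_sub_right_eq_self (fun t => (‖f t‖₊ : ℝ≥0∞) ^ (2:ℝ)) _]
    rw [lintegral_const, mul_comm]
  have hmain : ∫⁻ t, (‖T μ f t‖₊ : ℝ≥0∞) ^ (2:ℝ) ∂volume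
      ≤ μ Set.univ * (μ Set.univ * ∫⁻ t, (‖f t‖₊ : ℝ≥0∞) ^ (2:ℝ) ∂volume) := by
    rw [← hL, ← lintegral_const_mul' _ _ (measure_ne_top μ _)]
    refine lintegral_mono_ae ?_
    filter_upwards [ae_sections hf μ] with t ht using ht.2
  rw [eLpNorm_eq_lintegral_rpow_enorm_toReal (by norm_num) (by norm_num),
    eLpNorm_eq_lintegral_rpow_enorm_toReal (by norm_num) (by norm_num)]
  simp only [ENNReal.toReal_ofNat]
  calc (∫⁻ t, (‖T μ f t‖₊ : ℝ≥0∞) ^ (2:ℝ) ∂volume) ^ ((1:ℝ)/2)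
      ≤ (μ Set.univ * (μ Set.univ * ∫⁻ t, (‖f t‖₊ : ℝ≥0∞) ^ (2:ℝ) ∂volume)) ^ ((1:ℝ)/2) :=
        ENNReal.rpow_le_rpow hmain (by norm_num)
    _ = μ Set.univ * (∫⁻ t, (‖f t‖₊ : ℝ≥0∞) ^ (2:ℝ) ∂volume) ^ ((1:ℝ)/2) := by
        rw [← mul_assoc, ENNReal.mul_rpow_of_nonneg _ _ (by norm_num)]
        congr 1
        rw [ENNReal.mul_rpow_of_nonneg _ _ (by norm_num),
          ← ENNReal.rpow_add_of_nonneg (x := μ Set.univ) (1/2) (1/2) (by norm_num) (by norm_num)]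
        norm_num
  
lemma memLp_T {f : ℝ → ℝ} (hf : MemLp f 2 volume) (μ : Measure ℝ) [IsFiniteMeasure μ] :
    MemLp (T μ f) 2 volume :=
  ⟨aesm_T hf μ, lt_of_le_of_lt (eLpNorm_T_le hf μ)
    (ENNReal.mul_lt_top (measure_lt_top μ _) hf.2)⟩


lemma T_sub {f g : ℝ → ℝ} (hf : MemLp f 2 volume) (hg : MemLp g 2 volume)
    (μ : Measure ℝ) [IsFiniteMeasure μ] :
    T μ (fun t => f t - g t) =ᵐ[volume] fun t => T μ f t - T μ g t := by
  filter_upwards [ae_integrable hf μ, ae_integrable hg μ] with t h1 h2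
  simpa [T] using integral_sub h1 h2

lemma T_sum {F : ℕ → ℝ → ℝ} (hF : ∀ n, MemLp (F n) 2 volume) (s : Finset ℕ)
    (μ : Measure ℝ) [IsFiniteMeasure μ] :
    T μ (fun t => ∑ n ∈ s, F n t) =ᵐ[volume] fun t => ∑ n ∈ s, T μ (F n) t := by
  have h : ∀ᵐ t ∂(volume : Measure ℝ), ∀ n ∈ s, Integrable (fun u => F n (t - u)) μ :=
    (ae_ball_iff s.countable_toSet).2 fun n _ => ae_integrable (hF n) μ
  filter_upwards [h] with t ht
  simpa [T] using integral_finset_sum s ht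

lemma T_add_measure {f : ℝ → ℝ} (hf : MemLp f 2 volume) (μ ν : Measure ℝ)
    [IsFiniteMeasure μ] [IsFiniteMeasure ν] :
    T (μ + ν) f =ᵐ[volume] fun t => T μ f t + T ν f t := by
  filter_upwards [ae_integrable hf μ, ae_integrable hf ν] with t h1 h2
  simpa [T] using integral_add_measure h1 h2

lemma T_conv {f : ℝ → ℝ} (hf : MemLp f 2 volume) (α β : Measure ℝ)
    [IsFiniteMeasure α] [IsFiniteMeasure β] :
    T (α.conv β) f =ᵐ[volume] T β (T α f) := by
  have hconv : α.conv β = Measure.map (fun p : ℝ × ℝ => p.1 + p.2) (α.prod β) := rfl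
  have hadd : AEMeasurable (fun p : ℝ × ℝ => p.1 + p.2) (α.prod β) :=
    (measurable_fst.add measurable_snd).aemeasurable
  filter_upwards [ae_integrable hf (α.conv β)] with t hint
  have hsec' : AEStronglyMeasurable (fun u => f (t - u))
      (Measure.map (fun p : ℝ × ℝ => p.1 + p.2) (α.prod β)) := by
    rw [← hconv]; exact hint.aestronglyMeasurable
  have hint2 : Integrable (fun p : ℝ × ℝ => f (t - (p.1 + p.2))) (α.prod β) :=
    (integrable_map_measure hsec' hadd).1 (by rwa [← hconv])
  have key : ∀ v u : ℝ, t - (u + v) = (t - v) - u := by intros; ring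
  calc T (α.conv β) f t = ∫ p : ℝ × ℝ, f (t - (p.1 + p.2)) ∂(α.prod β) := by
        rw [T, hconv, integral_map hadd hsec']
    _ = ∫ v, ∫ u, f (t - (u + v)) ∂α ∂β := integral_prod_symm _ hint2
    _ = T β (T α f) t := by simp only [key]; rfl

variable (φp φm : Measure ℝ) [IsFiniteMeasure φp] [IsFiniteMeasure φm] (θ : ℝ → ℝ)

lemma convPow_fin (n : ℕ) :
    IsFiniteMeasure (convPow φp φm n).1 ∧ IsFiniteMeasure (convPow φp φm n).2 := by
  induction n with
  | zero =>
      rw [show convPow φp φm 0 = (Measure.dirac 0, 0) from rfl]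
      exact ⟨by infer_instance, by infer_instance⟩
  | succ n ih =>
      haveI := ih.1; haveI := ih.2
      rw [show convPow φp φm (n+1) =
        ((convPow φp φm n).1.conv φp + (convPow φp φm n).2.conv φm,
         (convPow φp φm n).1.conv φm + (convPow φp φm n).2.conv φp) from rfl]
      exact ⟨by infer_instance, by infer_instance⟩

variable (hθ : MemLp θ 2 volume)
include hθ

lemma K_mem (n : ℕ) : MemLp (convKernel θ (convPow φp φm n)) 2 volume := by
  haveI := (convPow_fin φp φm n).1; haveI := (convPow_fin φp φm n).2
  exact (memLp_T hθ (convPow φp φm n).1).sub (memLp_T hθ (convPow φp φm n).2)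

lemma K_step (n : ℕ) :
    convKernel θ (convPow φp φm (n+1)) =ᵐ[volume]
      fun t => T φp (convKernel θ (convPow φp φm n)) t
        - T φm (convKernel θ (convPow φp φm n)) t := by
  haveI := (convPow_fin φp φm n).1; haveI := (convPow_fin φp φm n).2
  set A := (convPow φp φm n).1 with hA
  set B := (convPow φp φm n).2 with hB
  have hTA := memLp_T hθ A
  have hTB := memLp_T hθ B
  have e1 := T_add_measure hθ (A.conv φp) (B.conv φm)
  have e2 := T_add_measure hθ (A.conv φm) (B.conv φp)
  have c1 := T_conv hθ A φp
  have c2 := T_conv hθ B φm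
  have c3 := T_conv hθ A φm
  have c4 := T_conv hθ B φp
  have l1 := T_sub hTA hTB φp
  have l2 := T_sub hTA hTB φm
  filter_upwards [e1, e2, c1, c2, c3, c4, l1, l2] with t h1 h2 h3 h4 h5 h6 h7 h8
  have hK1 : convKernel θ (convPow φp φm (n+1)) t
      = T (A.conv φp + B.conv φm) θ t - T (A.conv φm + B.conv φp) θ t := rfl
  have h7' : T φp (convKernel θ (convPow φp φm n)) t = T φp (T A θ) t - T φp (T B θ) t := h7
  have h8' : T φm (convKernel θ (convPow φp φm n)) t = T φm (T A θ) t - T φm (T B θ) t := h8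
  rw [hK1, h1, h2, h3, h4, h5, h6, h7', h8']
  ring

lemma S_mem (N : ℕ) :
    MemLp (fun t => ∑ n ∈ Finset.range N, convKernel θ (convPow φp φm n) t) 2 volume :=
  memLp_finset_sum (Finset.range N) fun n _ => K_mem φp φm θ hθ n

lemma S_step (N : ℕ) :
    (fun t => ∑ n ∈ Finset.range (N+1), convKernel θ (convPow φp φm n) t) =ᵐ[volume]
      fun t => θ t +
        (T φp (fun s => ∑ n ∈ Finset.range N, convKernel θ (convPow φp φm n) s) t
         - T φm (fun s => ∑ n ∈ Finset.range N, convKernel θ (convPow φp φm n) s) t) := by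
  have hsum : ∀ᵐ t ∂(volume : Measure ℝ), ∀ n ∈ Finset.range N,
      convKernel θ (convPow φp φm (n+1)) t
        = T φp (convKernel θ (convPow φp φm n)) t
          - T φm (convKernel θ (convPow φp φm n)) t :=
    (ae_ball_iff (Finset.range N).countable_toSet).2 fun n _ => K_step φp φm θ hθ n
  have tp := T_sum (fun n => K_mem φp φm θ hθ n) (Finset.range N) φp
  have tm := T_sum (fun n => K_mem φp φm θ hθ n) (Finset.range N) φm
  filter_upwards [hsum, tp, tm] with t h1 h2 h3
  have hK0 : convKernel θ (convPow φp φm 0) t = θ t := by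
    have : convPow φp φm 0 = (Measure.dirac 0, (0 : Measure ℝ)) := rfl
    rw [convKernel, this]
    simp [integral_dirac]
  calc (∑ n ∈ Finset.range (N+1), convKernel θ (convPow φp φm n) t)
      = (∑ n ∈ Finset.range N, convKernel θ (convPow φp φm (n+1)) t)
        + convKernel θ (convPow φp φm 0) t := Finset.sum_range_succ' _ N
    _ = (∑ n ∈ Finset.range N, (T φp (convKernel θ (convPow φp φm n)) t
          - T φm (convKernel θ (convPow φp φm n)) t)) + θ t := by
        rw [Finset.sum_congr rfl h1, hK0]
    _ = θ t + ((∑ n ∈ Finset.range N, T φp (convKernel θ (convPow φp φm n)) t)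
          - ∑ n ∈ Finset.range N, T φm (convKernel θ (convPow φp φm n)) t) := by
        rw [Finset.sum_sub_distrib]; ring
    _ = _ := by rw [← h2, ← h3]

end Stmt11

open Stmt11 in
/-- Theorem 3.1, fixed-point property. Let `φ` be a finite signed measure
on `(0,∞)` with `|φ|((0,∞)) < 1` and `θ ∈ L²` vanishing on `(-∞,0)`. If `ψ ∈ L²` is the
`L²`-limit of the series `Σₙ θ ∗ φ^{∗n}`, then
`ψ(t) = ∫_{(0,∞)} ψ(t-u) dφ(u) + θ(t)` for Lebesgue-a.e. `t`. -/
theorem statement11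
    (φp φm : Measure ℝ) [IsFiniteMeasure φp] [IsFiniteMeasure φm]
    (hsing : φp ⟂ₘ φm) (hconcp : φp (Set.Iic 0) = 0) (hconcm : φm (Set.Iic 0) = 0)
    (hcontr : φp Set.univ + φm Set.univ < 1)
    (θ : ℝ → ℝ) (hθ : MemLp θ 2 volume) (hθ0 : ∀ t : ℝ, t < 0 → θ t = 0)
    (ψ : ℝ → ℝ) (hψ : MemLp ψ 2 volume)
    (hlim : Tendsto
      (fun N : ℕ =>
        eLpNorm
          (fun t : ℝ =>
            (∑ n ∈ Finset.range N, convKernel θ (convPow φp φm n) t) - ψ t) 2 volume)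
      atTop (𝓝 0)) :
    ∀ᵐ t : ℝ ∂volume,
      ψ t = ((∫ u : ℝ, ψ (t - u) ∂φp) - ∫ u : ℝ, ψ (t - u) ∂φm) + θ t := by
  classical
  set S : ℕ → ℝ → ℝ :=
    fun N t => ∑ n ∈ Finset.range N, convKernel θ (convPow φp φm n) t with hS
  set ε : ℕ → ℝ≥0∞ := fun N => eLpNorm (fun t => S N t - ψ t) 2 volume with hε
  have hεlim : Tendsto ε atTop (𝓝 0) := hlim
  have hSmem : ∀ N, MemLp (S N) 2 volume := fun N => S_mem φp φm θ hθ N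
  set E : ℝ≥0∞ :=
    eLpNorm (fun t => (T φp ψ t - T φm ψ t + θ t) - ψ t) 2 volume with hE
  have key : ∀ N, E ≤ ε (N+1) + (φp Set.univ * ε N + φm Set.univ * ε N) := by
    intro N
    have hdmem : MemLp (fun t => ψ t - S N t) 2 volume := hψ.sub (hSmem N)
    have hdnorm : eLpNorm (fun t => ψ t - S N t) 2 volume = ε N := by
      rw [show (fun t => ψ t - S N t) = -(fun t => S N t - ψ t) from
        funext fun t => (neg_sub _ _).symm, eLpNorm_neg]
    have l1 := T_sub hψ (hSmem N) φp
    have l2 := T_sub hψ (hSmem N) φm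
    have hid : (fun t => (T φp ψ t - T φm ψ t + θ t) - ψ t) =ᵐ[volume]
        (fun t => S (N+1) t - ψ t)
          + (T φp (fun t => ψ t - S N t) - T φm (fun t => ψ t - S N t)) := by
      filter_upwards [S_step φp φm θ hθ N, l1, l2] with t h1 h2 h3
      show (T φp ψ t - T φm ψ t + θ t) - ψ t
          = (S (N+1) t - ψ t)
            + (T φp (fun t => ψ t - S N t) t - T φm (fun t => ψ t - S N t) t)
      have h1' : S (N+1) t = θ t + (T φp (S N) t - T φm (S N) t) := h1
      have h2' : T φp (fun t => ψ t - S N t) t = T φp ψ t - T φp (S N) t := h2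
      have h3' : T φm (fun t => ψ t - S N t) t = T φm ψ t - T φm (S N) t := h3
      rw [h1', h2', h3']
      ring
    have a1 : AEStronglyMeasurable (fun t => S (N+1) t - ψ t) volume :=
      ((hSmem (N+1)).sub hψ).1
    have a2 : AEStronglyMeasurable (T φp (fun t => ψ t - S N t)) volume :=
      (memLp_T hdmem φp).1
    have a3 : AEStronglyMeasurable (T φm (fun t => ψ t - S N t)) volume :=
      (memLp_T hdmem φm).1
    calc E = eLpNorm ((fun t => S (N+1) t - ψ t)
          + (T φp (fun t => ψ t - S N t) - T φm (fun t => ψ t - S N t))) 2 volume :=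
        eLpNorm_congr_ae hid
      _ ≤ eLpNorm (fun t => S (N+1) t - ψ t) 2 volume
          + eLpNorm (T φp (fun t => ψ t - S N t) - T φm (fun t => ψ t - S N t)) 2 volume :=
        eLpNorm_add_le a1 (a2.sub a3) one_le_two
      _ ≤ ε (N+1) + (eLpNorm (T φp (fun t => ψ t - S N t)) 2 volume
          + eLpNorm (T φm (fun t => ψ t - S N t)) 2 volume) := by
        gcongr
        exact eLpNorm_sub_le a2 a3 one_le_two
      _ ≤ ε (N+1) + (φp Set.univ * ε N + φm Set.univ * ε N) := by
        gcongr
        · exact (eLpNorm_T_le hdmem φp).trans (by rw [hdnorm])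
        · exact (eLpNorm_T_le hdmem φm).trans (by rw [hdnorm])
  have hrhs : Tendsto (fun N => ε (N+1) + (φp Set.univ * ε N + φm Set.univ * ε N))
      atTop (𝓝 0) := by
    have t1 : Tendsto (fun N => ε (N+1)) atTop (𝓝 0) :=
      hεlim.comp (tendsto_add_atTop_nat 1)
    have t2 : Tendsto (fun N => φp Set.univ * ε N) atTop (𝓝 0) := by
      have := ENNReal.Tendsto.const_mul (a := φp Set.univ) hεlim
        (Or.inr (measure_ne_top φp _))
      simpa using this
    have t3 : Tendsto (fun N => φm Set.univ * ε N) atTop (𝓝 0) := by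
      have := ENNReal.Tendsto.const_mul (a := φm Set.univ) hεlim
        (Or.inr (measure_ne_top φm _))
      simpa using this
    simpa using t1.add (t2.add t3)
  have hE0 : E = 0 := le_antisymm (ge_of_tendsto hrhs (Eventually.of_forall key)) zero_le
  have aE : AEStronglyMeasurable (fun t => (T φp ψ t - T φm ψ t + θ t) - ψ t) volume :=
    ((((memLp_T hψ φp).sub (memLp_T hψ φm)).add hθ).sub hψ).1
  have := (eLpNorm_eq_zero_iff aE (by norm_num)).1 hE0
  filter_upwards [this] with t ht
  have ht' : (T φp ψ t - T φm ψ t + θ t) - ψ t = 0 := ht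
  have : ψ t = T φp ψ t - T φm ψ t + θ t := by linarith [ht']
  exact this
end

section
/- Let β, γ > 0 and α₁, α₂ ∈ ℝ, and let η be the finite signed measure η(dv) = α₁ δ₀(dv) + (α₂/Γ(β)) v^{β−1} e^{−γv} 1_{(0,∞)}(v) dv. Then for every z ∈ ℂ with Re(z) ≤ 0 one has h(z) = −z − α₁ − α₂ (γ − z)^{−β} (with the principal branch of the complex power), and if α₁ < 0 and α₁ + |α₂| γ^{−β} < 0, then h(z) ≠ 0 for all z ∈ ℂ with Re(z) ≤ 0. -/
open MeasureTheory Complex Set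
open scoped ENNReal Real

open Filter
open scoped Topology

lemma integrableOn_real_aux {β : ℝ} (hβ : 0 < β) {c : ℝ} (hc : 0 < c) :
    IntegrableOn (fun t : ℝ => t ^ (β - 1) * Real.exp (-c * t)) (Ioi 0) := by
  have h := integrableOn_rpow_mul_exp_neg_mul_rpow (p := 1) (s := β - 1) (b := c)
    (by linarith) one_pos hc
  simpa using h

lemma meas_aux (β : ℝ) (w : ℂ) :
    AEStronglyMeasurable (fun t : ℝ => (t : ℂ) ^ ((β : ℂ) - 1) * Complex.exp (-(w * t)))
      (volume.restrict (Ioi 0)) := by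
  apply ContinuousOn.aestronglyMeasurable _ measurableSet_Ioi
  apply ContinuousOn.mul
  · intro t ht
    exact (Complex.continuousAt_ofReal_cpow_const t _ (Or.inr (ne_of_gt ht))).continuousWithinAt
  · exact (Complex.continuous_exp.comp (by continuity)).continuousOn

lemma integrableOn_caux {β : ℝ} (hβ : 0 < β) {w : ℂ} (hw : 0 < w.re) :
    IntegrableOn (fun t : ℝ => (t : ℂ) ^ ((β : ℂ) - 1) * Complex.exp (-(w * t))) (Ioi 0) := by
  refine Integrable.mono' (integrableOn_real_aux hβ hw) (meas_aux β w) ?_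
  filter_upwards [ae_restrict_mem measurableSet_Ioi] with t ht
  rw [norm_mul,
    Complex.norm_cpow_eq_rpow_re_of_pos ht, Complex.norm_exp]
  simp only [Complex.sub_re, Complex.ofReal_re, Complex.one_re, Complex.neg_re,
    Complex.mul_re, Complex.ofReal_im]
  have h0 : -(w.re * t - w.im * 0) = -w.re * t := by ring
  rw [h0]

lemma hasDerivAt_Faux {β : ℝ} (hβ : 0 < β) {w : ℂ} (hw : 0 < w.re) :
    HasDerivAt (fun w : ℂ => ∫ t in Ioi (0:ℝ), (t:ℂ) ^ ((β:ℂ) - 1) * Complex.exp (-(w * t)))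
      (∫ t in Ioi (0:ℝ), ((t:ℂ) ^ ((β:ℂ) - 1) * Complex.exp (-(w * t))) * (-(t:ℂ))) w := by
  have ε_pos : (0:ℝ) < w.re / 2 := by linarith
  have key := hasDerivAt_integral_of_dominated_loc_of_deriv_le
    (μ := volume.restrict (Ioi (0:ℝ)))
    (F := fun (w : ℂ) (t : ℝ) => (t:ℂ) ^ ((β:ℂ) - 1) * Complex.exp (-(w * t)))
    (F' := fun (w : ℂ) (t : ℝ) => ((t:ℂ) ^ ((β:ℂ) - 1) * Complex.exp (-(w * t))) * (-(t:ℂ)))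
    (x₀ := w) (bound := fun t : ℝ => t ^ β * Real.exp (-(w.re/2) * t)) (Metric.ball_mem_nhds w ε_pos)
    (Filter.Eventually.of_forall (fun x => meas_aux β x))
    (integrableOn_caux hβ hw)
    ((meas_aux β w).mul ((Complex.continuous_ofReal.neg).aestronglyMeasurable.restrict))
    ?_ ?_ ?_
  · exact key.2
  · -- bound
    filter_upwards [ae_restrict_mem measurableSet_Ioi] with t ht x hx
    have hxre : w.re / 2 ≤ x.re := by
      have := Complex.abs_re_le_norm (x - w)
      rw [Metric.mem_ball, Complex.dist_eq] at hx
      have h2 : |x.re - w.re| < w.re / 2 := by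
        simpa [Complex.sub_re] using lt_of_le_of_lt this hx
      have := abs_lt.mp h2
      linarith [this.1]
    rw [norm_mul, norm_mul,
      Complex.norm_cpow_eq_rpow_re_of_pos ht, Complex.norm_exp, norm_neg, Complex.norm_real, Real.norm_eq_abs,
      abs_of_pos ht]
    have h1 : t ^ (((β:ℂ) - 1).re) * Real.exp ((-(x * t)).re) * t
        = t ^ β * Real.exp ((-(x * t)).re) := by
      rw [mul_right_comm]
      congr 1
      have h2 : t ^ (((β:ℂ) - 1).re) * t = t ^ ((β - 1) + 1) := by
        rw [Real.rpow_add ht, Real.rpow_one]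
        norm_num
      rw [h2]
      norm_num
    rw [h1]
    gcongr
    · exact (Real.rpow_nonneg ht.le β)
    · simp only [Complex.neg_re, Complex.mul_re, Complex.ofReal_re, Complex.ofReal_im]
      nlinarith [(mem_Ioi.mp ht).le]
  · -- bound integrable
    have := integrableOn_real_aux (β := β + 1) (by linarith) ε_pos
    simpa [IntegrableOn] using this
  · -- differentiability
    filter_upwards [ae_restrict_mem measurableSet_Ioi] with t _ x _
    have hd : HasDerivAt (fun x : ℂ => Complex.exp (-(x * t)))
        (Complex.exp (-(x * t)) * (-(1 * (t:ℂ)))) x :=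
      (((hasDerivAt_id x).mul_const (t:ℂ)).neg).cexp
    have := hd.const_mul ((t:ℂ) ^ ((β:ℂ) - 1))
    convert this using 1
    · rfl
    ring

lemma key_integral {β : ℝ} (hβ : 0 < β) {w : ℂ} (hw : 0 < w.re) :
    ∫ t in Ioi (0:ℝ), (t:ℂ) ^ ((β:ℂ) - 1) * Complex.exp (-(w * t)) =
      Complex.Gamma β * w ^ (-(β:ℂ)) := by
  set U : Set ℂ := {w : ℂ | 0 < w.re} with hU
  have hUo : IsOpen U := isOpen_lt continuous_const Complex.continuous_re
  have hUc : IsPreconnected U := (convex_halfSpace_re_gt 0).isPreconnected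
  have hF : AnalyticOnNhd ℂ
      (fun w : ℂ => ∫ t in Ioi (0:ℝ), (t:ℂ) ^ ((β:ℂ) - 1) * Complex.exp (-(w * t))) U :=
    DifferentiableOn.analyticOnNhd
      (fun w hw => ((hasDerivAt_Faux hβ hw).differentiableAt).differentiableWithinAt) hUo
  have hG : AnalyticOnNhd ℂ (fun w : ℂ => Complex.Gamma β * w ^ (-(β:ℂ))) U :=
    DifferentiableOn.analyticOnNhd
      (fun w hw => ((differentiableAt_id.cpow (differentiableAt_const _)
        (Complex.mem_slitPlane_iff.mpr (Or.inl hw))).const_mul _).differentiableWithinAt) hUo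
  have h₀ : (1:ℂ) ∈ U := by simp [hU]
  have heq : ∀ n : ℕ, (fun w : ℂ => ∫ t in Ioi (0:ℝ), (t:ℂ) ^ ((β:ℂ) - 1)
      * Complex.exp (-(w * t))) (((1 + ((n:ℝ)+1)⁻¹ : ℝ) : ℂ))
      = (fun w : ℂ => Complex.Gamma β * w ^ (-(β:ℂ))) (((1 + ((n:ℝ)+1)⁻¹ : ℝ) : ℂ)) := by
    intro n
    have hr : (0:ℝ) < 1 + ((n:ℝ)+1)⁻¹ := by positivity
    have := Complex.integral_cpow_mul_exp_neg_mul_Ioi (a := (β:ℂ))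
      (r := 1 + ((n:ℝ)+1)⁻¹) (by simpa using hβ) hr
    simp only [this]
    rw [one_div, Complex.inv_cpow _ _ (by
        rw [Complex.arg_ofReal_of_nonneg hr.le]; exact Real.pi_ne_zero.symm),
      ← Complex.cpow_neg, mul_comm]
  have hfreq : ∃ᶠ z in 𝓝[≠] (1:ℂ),
      (fun w : ℂ => ∫ t in Ioi (0:ℝ), (t:ℂ) ^ ((β:ℂ) - 1) * Complex.exp (-(w * t))) z
      = (fun w : ℂ => Complex.Gamma β * w ^ (-(β:ℂ))) z := by
    have htend : Tendsto (fun n : ℕ => (((1 + ((n:ℝ)+1)⁻¹ : ℝ) : ℂ))) atTop (𝓝[≠] (1:ℂ)) := by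
      apply tendsto_nhdsWithin_of_tendsto_nhds_of_eventually_within
      · have h1 : Tendsto (fun n : ℕ => (1 + ((n:ℝ)+1)⁻¹ : ℝ)) atTop (𝓝 1) := by
          have := tendsto_one_div_add_atTop_nhds_zero_nat (𝕜 := ℝ)
          simpa [one_div] using tendsto_const_nhds.add this
        have := (Complex.continuous_ofReal.tendsto 1).comp h1
        simpa [Function.comp_def] using this
      · apply Filter.Eventually.of_forall
        intro n
        simp only [mem_compl_iff, mem_singleton_iff]
        intro hcon
        rw [show (1:ℂ) = ((1:ℝ):ℂ) by norm_num, Complex.ofReal_inj] at hcon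
        have : (0:ℝ) < ((n:ℝ)+1)⁻¹ := by positivity
        linarith [hcon]
    exact htend.frequently (Filter.Frequently.of_forall heq)
  exact hF.eqOn_of_preconnected_of_frequently_eq hG hUc h₀ hfreq hw

/-- `h(z) = -z - ∫_{[0,∞)} e^{zv} dη(v)` for the gamma-type delay measure
`η(dv) = α₁ δ₀(dv) + (α₂/Γ(β)) v^{β-1} e^{-γv} 1_{(0,∞)}(v) dv`. -/
noncomputable def hGamma (α₁ α₂ β γ : ℝ) (z : ℂ) : ℂ :=
  -z - ((α₁ : ℂ) + ∫ v in Set.Ioi (0 : ℝ),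
    Complex.exp (z * v) * (((α₂ / Real.Gamma β) * v ^ (β - 1) * Real.exp (-γ * v) : ℝ) : ℂ))

/-- Example 2.10. Let `β, γ > 0` and `α₁, α₂ ∈ ℝ` and let `η` be the
gamma-type delay measure above. Then `h(z) = -z - α₁ - α₂ (γ - z)^{-β}` (principal branch)
for every `z` with `Re z ≤ 0`, and if `α₁ < 0` and `α₁ + |α₂| γ^{-β} < 0`, then `h(z) ≠ 0`
for all `z` with `Re z ≤ 0`. -/
theorem statement15
    (α₁ α₂ β γ : ℝ) (hβ : 0 < β) (hγ : 0 < γ) :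
    (∀ z : ℂ, z.re ≤ 0 →
      hGamma α₁ α₂ β γ z = -z - (α₁ : ℂ) - (α₂ : ℂ) * ((γ : ℂ) - z) ^ (-β : ℂ)) ∧
    (α₁ < 0 → α₁ + |α₂| * γ ^ (-β) < 0 →
      ∀ z : ℂ, z.re ≤ 0 → hGamma α₁ α₂ β γ z ≠ 0) := by
  have part1 : ∀ z : ℂ, z.re ≤ 0 →
      hGamma α₁ α₂ β γ z = -z - (α₁ : ℂ) - (α₂ : ℂ) * ((γ : ℂ) - z) ^ (-β : ℂ) := by
    intro z hz
    set w : ℂ := (γ : ℂ) - z with hwdef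
    have hw : 0 < w.re := by
      simp only [hwdef, Complex.sub_re, Complex.ofReal_re]
      linarith
    have hI : (∫ v in Set.Ioi (0 : ℝ),
        Complex.exp (z * v) * (((α₂ / Real.Gamma β) * v ^ (β - 1) * Real.exp (-γ * v) : ℝ) : ℂ))
        = (α₂ : ℂ) * w ^ (-(β:ℂ)) := by
      have hcongr : ∀ v ∈ Ioi (0:ℝ),
          Complex.exp (z * v) * (((α₂ / Real.Gamma β) * v ^ (β - 1) * Real.exp (-γ * v) : ℝ) : ℂ)
          = ((α₂ / Real.Gamma β : ℝ) : ℂ) * ((v:ℂ) ^ ((β:ℂ) - 1) * Complex.exp (-(w * v))) := by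
        intro v hv
        rw [Complex.ofReal_mul, Complex.ofReal_mul, Complex.ofReal_cpow (le_of_lt hv),
          Complex.ofReal_exp]
        push_cast
        have hexp : Complex.exp (z * v) * Complex.exp (-(γ:ℂ) * v)
            = Complex.exp (-(w * v)) := by
          rw [← Complex.exp_add]
          congr 1
          rw [hwdef]
          ring
        linear_combination (((α₂ : ℂ) / (Real.Gamma β : ℂ)) * (v:ℂ) ^ ((β:ℂ) - 1)) * hexp
      rw [setIntegral_congr_fun measurableSet_Ioi hcongr, integral_const_mul,
        key_integral hβ hw, Complex.Gamma_ofReal]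
      have hΓ : ((Real.Gamma β : ℝ) : ℂ) ≠ 0 :=
        Complex.ofReal_ne_zero.mpr (Real.Gamma_pos_of_pos hβ).ne'
      push_cast
      field_simp
    rw [hGamma, hI]
    ring
  refine ⟨part1, ?_⟩
  intro hα₁ h2 z hz hcon
  rw [part1 z hz] at hcon
  set w : ℂ := (γ : ℂ) - z with hwdef
  have hw : 0 < w.re := by
    simp only [hwdef, Complex.sub_re, Complex.ofReal_re]
    linarith
  have hre := congrArg Complex.re hcon
  simp only [Complex.sub_re, Complex.neg_re, Complex.ofReal_re, Complex.zero_re] at hre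
  set r : ℝ := ((α₂ : ℂ) * w ^ (-(β:ℂ))).re with hrdef
  have habs : ‖(α₂ : ℂ) * w ^ (-(β:ℂ))‖ ≤ |α₂| * γ ^ (-β) := by
    rw [norm_mul, Complex.norm_real, Real.norm_eq_abs]
    have hw0 : w ≠ 0 := by
      intro hcon0
      rw [hcon0] at hw
      simp at hw
    have hγw : γ ≤ ‖w‖ := by
      have h1 : γ ≤ w.re := by
        simp only [hwdef, Complex.sub_re, Complex.ofReal_re]
        linarith
      exact h1.trans (Complex.re_le_norm w)
    have hcp : ‖w ^ (-(β:ℂ))‖ ≤ γ ^ (-β) := by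
      rw [Complex.norm_cpow_of_ne_zero hw0]
      simp only [Complex.neg_re, Complex.ofReal_re, Complex.neg_im, Complex.ofReal_im,
        neg_zero, mul_zero, Real.exp_zero, div_one]
      exact Real.rpow_le_rpow_of_nonpos hγ hγw (neg_nonpos.mpr hβ.le)
    exact mul_le_mul_of_nonneg_left hcp (abs_nonneg α₂)
  have hr_le : r ≤ |α₂| * γ ^ (-β) :=
    (le_abs_self r).trans ((Complex.abs_re_le_norm _).trans habs)
  linarith
end

section
/- Let α ∈ ℝ and β > 0 with α < β, let φ be the finite measure-type signed measure φ(du) = α e^{−βu} 1_{(0,∞)}(u) du and ξ the finite signed measure ξ(du) = α e^{(α−β)u} 1_{(0,∞)}(u) du, and let θ ∈ L²(ℝ) vanish on (−∞,0). Then θ∗ξ ∈ L²(ℝ), and the function ψ := θ + θ∗ξ, which vanishes Lebesgue-almost everywhere on (−∞,0), satisfies the level equation ψ(t) = ∫_{(0,∞)} ψ(t−u) dφ(u) + θ(t) for Lebesgue-almost all t ∈ ℝ. -/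
open MeasureTheory Set
open scoped ENNReal

namespace S19

-- Hölder: product of two L² functions is integrable
lemma holder_mul {a b : ℝ → ℝ} (ha : MemLp a 2 (volume : Measure ℝ))
    (hb : MemLp b 2 (volume : Measure ℝ)) :
    Integrable (fun t => a t * b t) volume := by
  have h : MemLp (a • b) 1 (volume : Measure ℝ) :=
    hb.smul ha
  rw [← memLp_one_iff_integrable]
  exact h

lemma memℒp_comp_sub_left {f : ℝ → ℝ} (hf : MemLp f 2 (volume : Measure ℝ)) (c : ℝ) :
    MemLp (fun t => f (c - t)) 2 (volume : Measure ℝ) :=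
  hf.comp_measurePreserving (Measure.measurePreserving_sub_left volume c)

lemma holder_cea {a b : ℝ → ℝ} (ha : MemLp a 2 (volume : Measure ℝ))
    (hb : MemLp b 2 (volume : Measure ℝ)) (x : ℝ) :
    ConvolutionExistsAt a b x (ContinuousLinearMap.mul ℝ ℝ) volume := by
  have h : Integrable (fun t => a t * b (x - t)) volume :=
    holder_mul ha (memℒp_comp_sub_left hb x)
  exact h

lemma qmp_sub : Measure.QuasiMeasurePreserving (fun p : ℝ × ℝ => p.1 - p.2)
    ((volume : Measure ℝ).prod volume) volume :=
  Measure.quasiMeasurePreserving_fst.comp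
    (measurePreserving_sub_prod volume volume).quasiMeasurePreserving

end S19

namespace S19

lemma young_lintegral {w f : ℝ → ℝ≥0∞} (hw : AEMeasurable w (volume : Measure ℝ))
    (hf : AEMeasurable f (volume : Measure ℝ))
    (hwfin : ∀ t, w t ≠ ∞) (hwC : (∫⁻ t, w t) ≠ ∞) :
    ∫⁻ x, (∫⁻ t, w t * f (x - t)) ^ (2:ℝ) ≤
      ((∫⁻ t, w t) ^ (2:ℝ)) * ∫⁻ x, f x ^ (2:ℝ) := by
  set C := ∫⁻ t, w t with hC
  have h2 : (0:ℝ) ≤ 2 := by norm_num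
  have hhalf : (0:ℝ) ≤ 1/2 := by norm_num
  have key : ∀ x : ℝ, (∫⁻ t, w t * f (x - t)) ^ (2:ℝ) ≤
      C * ∫⁻ t, w t * f (x - t) ^ (2:ℝ) := by
    intro x
    have hfx : AEMeasurable (fun t => f (x - t)) (volume : Measure ℝ) :=
      hf.comp_quasiMeasurePreserving
        (Measure.measurePreserving_sub_left volume x).quasiMeasurePreserving
    have hconj : Real.HolderConjugate 2 2 := Real.HolderConjugate.two_two
    have hCS := ENNReal.lintegral_mul_le_Lp_mul_Lq volume hconj
      (hw.pow aemeasurable_const (γ := ℝ))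
      ((hw.pow aemeasurable_const (γ := ℝ)).mul hfx)
      (f := fun t => w t ^ (1/2:ℝ)) (g := fun t => w t ^ (1/2:ℝ) * f (x - t))
    have e1 : ∀ a:ℝ, (w a ^ (1/2:ℝ)) * (w a ^ (1/2:ℝ) * f (x - a)) = w a * f (x - a) := by
      intro a
      rw [← mul_assoc, ← ENNReal.rpow_add_of_nonneg _ _ hhalf hhalf]
      norm_num
    have e2 : ∀ a:ℝ, (w a ^ (1/2:ℝ)) ^ (2:ℝ) = w a := by
      intro a; rw [← ENNReal.rpow_mul]; norm_num
    have e3 : ∀ a:ℝ, (w a ^ (1/2:ℝ) * f (x - a)) ^ (2:ℝ) = w a * f (x - a) ^ (2:ℝ) := by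
      intro a; rw [ENNReal.mul_rpow_of_nonneg _ _ h2, e2]
    simp only [Pi.mul_apply, e1, e2, e3] at hCS
    calc (∫⁻ t, w t * f (x - t)) ^ (2:ℝ)
        ≤ (C ^ (1/2:ℝ) * (∫⁻ t, w t * f (x - t) ^ (2:ℝ)) ^ (1/2:ℝ)) ^ (2:ℝ) :=
          ENNReal.rpow_le_rpow hCS h2
      _ = C * ∫⁻ t, w t * f (x - t) ^ (2:ℝ) := by
          rw [ENNReal.mul_rpow_of_nonneg _ _ h2, ← ENNReal.rpow_mul, ← ENNReal.rpow_mul]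
          norm_num
  have hprod : AEMeasurable (Function.uncurry fun x t => w t * f (x - t) ^ (2:ℝ))
      ((volume : Measure ℝ).prod volume) := by
    have h1 : AEMeasurable (fun p : ℝ × ℝ => w p.2) ((volume : Measure ℝ).prod volume) :=
      hw.comp_quasiMeasurePreserving Measure.quasiMeasurePreserving_snd
    have h2' : AEMeasurable (fun p : ℝ × ℝ => f (p.1 - p.2))
        ((volume : Measure ℝ).prod volume) :=
      hf.comp_quasiMeasurePreserving qmp_sub
    exact h1.mul (h2'.pow aemeasurable_const)
  have htrans : ∀ t : ℝ, ∫⁻ x, f (x - t) ^ (2:ℝ) = ∫⁻ x, f x ^ (2:ℝ) := by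
    intro t
    have hmap := (measurePreserving_sub_right volume t).map_eq
    conv_rhs => rw [← hmap]
    refine (lintegral_map' (f := fun y => f y ^ (2:ℝ)) ?_
      (measurable_sub_const t).aemeasurable).symm
    rw [hmap]; exact hf.pow aemeasurable_const
  calc
    ∫⁻ x, (∫⁻ t, w t * f (x - t)) ^ (2:ℝ)
        ≤ ∫⁻ x, C * ∫⁻ t, w t * f (x - t) ^ (2:ℝ) := lintegral_mono key
    _ = C * ∫⁻ x, ∫⁻ t, w t * f (x - t) ^ (2:ℝ) := lintegral_const_mul' C _ hwC
    _ = C * ∫⁻ t, ∫⁻ x, w t * f (x - t) ^ (2:ℝ) := by rw [lintegral_lintegral_swap hprod]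
    _ = C * ∫⁻ t, w t * ∫⁻ x, f (x - t) ^ (2:ℝ) := by
        congr 1; exact lintegral_congr fun t => lintegral_const_mul' (w t) _ (hwfin t)
    _ = C * ∫⁻ t, w t * ∫⁻ x, f x ^ (2:ℝ) := by
        congr 1; exact lintegral_congr fun t => by rw [htrans t]
    _ = C ^ (2:ℝ) * ∫⁻ x, f x ^ (2:ℝ) := by
        rw [lintegral_mul_const'' _ hw, ← mul_assoc,
          show C ^ (2:ℝ) = C * C by
            rw [show (2:ℝ) = ((2:ℕ):ℝ) by norm_num, ENNReal.rpow_natCast, sq]]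

end S19

namespace S19

lemma young_conv {w f : ℝ → ℝ} (hw : Integrable w (volume : Measure ℝ))
    (hf : MemLp f 2 (volume : Measure ℝ)) :
    MemLp (convolution w f (ContinuousLinearMap.mul ℝ ℝ) volume) 2 volume := by
  have hwm := hw.aestronglyMeasurable
  have hfm := hf.aestronglyMeasurable
  have hconv_m : AEStronglyMeasurable
      (convolution w f (ContinuousLinearMap.mul ℝ ℝ) volume) volume :=
    (hwm.convolution_integrand (ContinuousLinearMap.mul ℝ ℝ) hfm).integral_prod_right'
  refine ⟨hconv_m, ?_⟩
  refine (eLpNorm_lt_top_iff_lintegral_rpow_enorm_lt_top two_ne_zero ENNReal.ofNat_ne_top).mpr ?_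
  have htoReal : (2:ℝ≥0∞).toReal = (2:ℝ) := by simp
  rw [htoReal]
  have hbound : ∀ x : ℝ,
      (‖(convolution w f (ContinuousLinearMap.mul ℝ ℝ) volume) x‖₊ : ℝ≥0∞) ≤
        ∫⁻ t, (‖w t‖₊ : ℝ≥0∞) * (‖f (x - t)‖₊ : ℝ≥0∞) := by
    intro x
    calc (‖(convolution w f (ContinuousLinearMap.mul ℝ ℝ) volume) x‖₊ : ℝ≥0∞)
        ≤ ∫⁻ t, ‖(ContinuousLinearMap.mul ℝ ℝ) (w t) (f (x - t))‖₊ :=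
          enorm_integral_le_lintegral_enorm _
      _ = ∫⁻ t, (‖w t‖₊ : ℝ≥0∞) * (‖f (x - t)‖₊ : ℝ≥0∞) :=
          lintegral_congr fun t => by
            rw [ContinuousLinearMap.mul_apply', nnnorm_mul, ENNReal.coe_mul]
  have hwC : (∫⁻ t, (‖w t‖₊ : ℝ≥0∞)) ≠ ∞ := hw.2.ne
  have hyoung := young_lintegral (w := fun t => (‖w t‖₊ : ℝ≥0∞))
    (f := fun x => (‖f x‖₊ : ℝ≥0∞)) hwm.enorm hfm.enorm
    (fun t => ENNReal.coe_ne_top) hwC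
  have hf2 : (∫⁻ x, (‖f x‖₊ : ℝ≥0∞) ^ (2:ℝ)) < ⊤ := by
    have := lintegral_rpow_enorm_lt_top_of_eLpNorm_lt_top two_ne_zero ENNReal.ofNat_ne_top hf.2
    rw [htoReal] at this; exact this
  calc ∫⁻ x, (‖(convolution w f (ContinuousLinearMap.mul ℝ ℝ) volume) x‖₊ : ℝ≥0∞) ^ (2:ℝ)
      ≤ ∫⁻ x, (∫⁻ t, (‖w t‖₊ : ℝ≥0∞) * (‖f (x - t)‖₊ : ℝ≥0∞)) ^ (2:ℝ) :=
        lintegral_mono fun x => ENNReal.rpow_le_rpow (hbound x) (by norm_num)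
    _ ≤ ((∫⁻ t, (‖w t‖₊ : ℝ≥0∞)) ^ (2:ℝ)) * ∫⁻ x, (‖f x‖₊ : ℝ≥0∞) ^ (2:ℝ) := hyoung
    _ < ⊤ := ENNReal.mul_lt_top
        (ENNReal.rpow_lt_top_of_nonneg (by norm_num) hwC) hf2

end S19

namespace S19

lemma int_exp (c δ : ℝ) (hδ : 0 < δ) :
    Integrable ((Ioi (0:ℝ)).indicator fun u => c * Real.exp (-δ * u)) volume := by
  rw [integrable_indicator_iff measurableSet_Ioi]
  exact (exp_neg_integrableOn_Ioi 0 hδ).const_mul c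

lemma memℒp2_exp (c δ : ℝ) (hδ : 0 < δ) :
    MemLp ((Ioi (0:ℝ)).indicator fun u => c * Real.exp (-δ * u)) 2 volume := by
  have hm : AEStronglyMeasurable ((Ioi (0:ℝ)).indicator fun u => c * Real.exp (-δ * u))
      volume := by
    apply AEStronglyMeasurable.indicator ?_ measurableSet_Ioi
    exact (continuous_const.mul
      (Real.continuous_exp.comp (continuous_const.mul continuous_id))).aestronglyMeasurable
  rw [memLp_two_iff_integrable_sq hm]
  have hpt : ∀ u : ℝ, ((Ioi (0:ℝ)).indicator (fun u => c * Real.exp (-δ * u)) u) ^ 2 =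
      (Ioi (0:ℝ)).indicator (fun u => (c^2) * Real.exp (-(2*δ) * u)) u := by
    intro u
    by_cases hu : u ∈ Ioi (0:ℝ)
    · simp only [indicator_of_mem hu]
      rw [mul_pow, sq (Real.exp _), ← Real.exp_add]
      congr 1
      ring
    · simp [indicator_of_notMem hu]
  rw [show (fun u => ((Ioi (0:ℝ)).indicator (fun u => c * Real.exp (-δ * u)) u) ^ 2) =
      (Ioi (0:ℝ)).indicator (fun u => (c^2) * Real.exp (-(2*δ) * u)) from funext hpt]
  exact int_exp (c^2) (2*δ) (by positivity)

lemma intervalInt_exp (α : ℝ) : ∀ x : ℝ,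
    ∫ t in (0:ℝ)..x, α * Real.exp (-α * t) = 1 - Real.exp (-α * x) := by
  intro x
  have hd : ∀ t ∈ uIcc (0:ℝ) x,
      HasDerivAt (fun s => -Real.exp (-α * s)) (α * Real.exp (-α * t)) t := by
    intro t _
    have h1 : HasDerivAt (fun s : ℝ => -α * s) (-α) t := by
      simpa using (hasDerivAt_id t).const_mul (-α)
    have h3 : HasDerivAt (fun s => -Real.exp (-α * s)) _ t := h1.exp.neg
    convert h3 using 1
    ring
  have hc : IntervalIntegrable (fun t => α * Real.exp (-α * t)) volume 0 x :=
    (continuous_const.mul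
      (Real.continuous_exp.comp (continuous_const.mul continuous_id))).intervalIntegrable 0 x
  rw [intervalIntegral.integral_eq_sub_of_hasDerivAt hd hc]
  simp only [mul_zero, Real.exp_zero, neg_zero]
  ring_nf

lemma convKG (α β : ℝ) :
    convolution ((Ioi (0:ℝ)).indicator fun u => α * Real.exp (-β * u))
      ((Ioi (0:ℝ)).indicator fun u => α * Real.exp ((α - β) * u))
      (ContinuousLinearMap.mul ℝ ℝ) volume
    = fun x => (Ioi (0:ℝ)).indicator (fun u => α * Real.exp ((α - β) * u)) x
        - (Ioi (0:ℝ)).indicator (fun u => α * Real.exp (-β * u)) x := by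
  have h := posConvolution_eq_convolution_indicator (fun u => α * Real.exp (-β * u))
      (fun u => α * Real.exp ((α - β) * u)) (ContinuousLinearMap.mul ℝ ℝ) volume
  rw [← h]
  funext x
  by_cases hx : x ∈ Ioi (0:ℝ)
  · rw [posConvolution, indicator_of_mem hx, indicator_of_mem hx, indicator_of_mem hx]
    have hint : ∀ t : ℝ, (α * Real.exp (-β * t)) * (α * Real.exp ((α - β) * (x - t))) =
        (α * Real.exp ((α - β) * x)) * (α * Real.exp (-α * t)) := by
      intro t
      rw [mul_mul_mul_comm, mul_mul_mul_comm α (Real.exp ((α - β) * x)), ← Real.exp_add,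
        ← Real.exp_add]
      congr 2
      ring
    calc ∫ t in (0:ℝ)..x,
          (ContinuousLinearMap.mul ℝ ℝ) (α * Real.exp (-β * t)) (α * Real.exp ((α - β) * (x - t)))
        = ∫ t in (0:ℝ)..x, (α * Real.exp ((α - β) * x)) * (α * Real.exp (-α * t)) := by
          simp only [ContinuousLinearMap.mul_apply']
          exact intervalIntegral.integral_congr fun t _ => hint t
      _ = (α * Real.exp ((α - β) * x)) * ∫ t in (0:ℝ)..x, α * Real.exp (-α * t) :=
          intervalIntegral.integral_const_mul _ _
      _ = (α * Real.exp ((α - β) * x)) * (1 - Real.exp (-α * x)) := by rw [intervalInt_exp α x]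
      _ = α * Real.exp ((α - β) * x) - α * Real.exp (-β * x) := by
          rw [mul_sub, mul_one, mul_assoc, ← Real.exp_add]
          congr 3
          ring
  · rw [posConvolution, indicator_of_notMem hx, indicator_of_notMem hx,
      indicator_of_notMem hx, sub_zero]

end S19


open S19 in
/-- Example 3.3. Let `α < β`, `β > 0`, `φ(du) = α e^{-βu} 1_{(0,∞)}(u) du`,
`ξ(du) = α e^{(α-β)u} 1_{(0,∞)}(u) du`, and let `θ ∈ L²` vanish on `(-∞,0)`. Then
`θ ∗ ξ ∈ L²` and `ψ = θ + θ ∗ ξ`, which vanishes a.e. on `(-∞,0)`, satisfies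
`ψ(t) = ∫_{(0,∞)} ψ(t-u) dφ(u) + θ(t)` for Lebesgue-a.e. `t`. -/
theorem statement19
    (α β : ℝ) (hβ : 0 < β) (hαβ : α < β)
    (θ : ℝ → ℝ) (hθ : MemLp θ 2 volume) (hθ0 : ∀ t : ℝ, t < 0 → θ t = 0)
    (ψ : ℝ → ℝ)
    (hψdef : ∀ t : ℝ,
      ψ t = θ t + ∫ u in Set.Ioi (0 : ℝ), θ (t - u) * (α * Real.exp ((α - β) * u))) :
    MemLp
      (fun t : ℝ => ∫ u in Set.Ioi (0 : ℝ), θ (t - u) * (α * Real.exp ((α - β) * u)))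
      2 volume ∧
    (∀ᵐ t : ℝ ∂volume, t < 0 → ψ t = 0) ∧
    ∀ᵐ t : ℝ ∂volume,
      ψ t = (∫ u in Set.Ioi (0 : ℝ), ψ (t - u) * (α * Real.exp (-β * u))) + θ t := by
  have hK_int : Integrable ((Ioi (0:ℝ)).indicator fun u => α * Real.exp (-β * u)) volume :=
    int_exp α β hβ
  have hK2 : MemLp ((Ioi (0:ℝ)).indicator fun u => α * Real.exp (-β * u)) 2 volume :=
    memℒp2_exp α β hβ
  have hGf_eq : ((Ioi (0:ℝ)).indicator fun u => α * Real.exp ((α - β) * u))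
      = (Ioi (0:ℝ)).indicator (fun u => α * Real.exp (-(β - α) * u)) := by
    congr 1; funext u; rw [neg_sub]
  have hGf_int : Integrable ((Ioi (0:ℝ)).indicator fun u => α * Real.exp ((α - β) * u))
      volume := by
    rw [hGf_eq]; exact int_exp α (β - α) (by linarith)
  have hGf2 : MemLp ((Ioi (0:ℝ)).indicator fun u => α * Real.exp ((α - β) * u)) 2 volume := by
    rw [hGf_eq]; exact memℒp2_exp α (β - α) (by linarith)
  -- the statement's integral is a convolution
  have hFeq' : ∀ s : ℝ, (∫ u in Set.Ioi (0 : ℝ), θ (s - u) * (α * Real.exp ((α - β) * u)))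
      = convolution ((Ioi (0:ℝ)).indicator fun u => α * Real.exp ((α - β) * u)) θ
          (ContinuousLinearMap.mul ℝ ℝ) volume s := by
    intro s
    rw [convolution_def]
    simp only [ContinuousLinearMap.mul_apply']
    rw [← integral_indicator measurableSet_Ioi]
    congr 1; funext u
    by_cases hu : u ∈ Ioi (0:ℝ) <;> simp [indicator_of_mem, indicator_of_notMem, hu, mul_comm]
  have hH : MemLp (convolution ((Ioi (0:ℝ)).indicator fun u => α * Real.exp ((α - β) * u)) θ
      (ContinuousLinearMap.mul ℝ ℝ) volume) 2 volume := young_conv hGf_int hθ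
  refine ⟨?_, ?_, ?_⟩
  · rw [show (fun t : ℝ => ∫ u in Set.Ioi (0 : ℝ), θ (t - u) * (α * Real.exp ((α - β) * u)))
      = convolution ((Ioi (0:ℝ)).indicator fun u => α * Real.exp ((α - β) * u)) θ
          (ContinuousLinearMap.mul ℝ ℝ) volume from funext hFeq']
    exact hH
  · refine Filter.Eventually.of_forall fun t ht => ?_
    rw [hψdef t, hθ0 t ht, zero_add]
    rw [setIntegral_congr_fun measurableSet_Ioi (g := fun _ : ℝ => (0:ℝ))
      (fun u hu => by rw [hθ0 (t - u) (by have := mem_Ioi.mp hu; linarith), zero_mul])]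
    exact integral_zero _ _
  · refine Filter.Eventually.of_forall fun t => ?_
    have hθt : MemLp (fun u => θ (t - u)) 2 (volume : Measure ℝ) := memℒp_comp_sub_left hθ t
    have hHt : MemLp (fun u =>
        (convolution ((Ioi (0:ℝ)).indicator fun u => α * Real.exp ((α - β) * u)) θ
          (ContinuousLinearMap.mul ℝ ℝ) volume) (t - u)) 2 (volume : Measure ℝ) :=
      memℒp_comp_sub_left hH t
    have i1 : Integrable (fun u => ((Ioi (0:ℝ)).indicator fun u => α * Real.exp (-β * u)) u *
        θ (t - u)) volume := holder_mul hK2 hθt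
    have i2 : Integrable (fun u => ((Ioi (0:ℝ)).indicator fun u => α * Real.exp (-β * u)) u *
        (convolution ((Ioi (0:ℝ)).indicator fun u => α * Real.exp ((α - β) * u)) θ
          (ContinuousLinearMap.mul ℝ ℝ) volume) (t - u)) volume := holder_mul hK2 hHt
    have i3 : Integrable (fun u => ((Ioi (0:ℝ)).indicator fun u => α * Real.exp ((α - β) * u)) u *
        θ (t - u)) volume := holder_mul hGf2 hθt
    -- step 1: rewrite the set integral
    have step1 : (∫ u in Set.Ioi (0 : ℝ), ψ (t - u) * (α * Real.exp (-β * u)))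
        = ∫ u, (((Ioi (0:ℝ)).indicator fun u => α * Real.exp (-β * u)) u * θ (t - u)
            + ((Ioi (0:ℝ)).indicator fun u => α * Real.exp (-β * u)) u *
              (convolution ((Ioi (0:ℝ)).indicator fun u => α * Real.exp ((α - β) * u)) θ
                (ContinuousLinearMap.mul ℝ ℝ) volume) (t - u)) := by
      rw [← integral_indicator measurableSet_Ioi]
      congr 1; funext u
      by_cases hu : u ∈ Ioi (0:ℝ)
      · simp only [indicator_of_mem hu]
        rw [hψdef (t - u), hFeq' (t - u)]
        ring
      · simp [indicator_of_notMem hu]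
    have step2 := integral_add i1 i2
    have c1 : convolution ((Ioi (0:ℝ)).indicator fun u => α * Real.exp (-β * u)) θ
        (ContinuousLinearMap.mul ℝ ℝ) volume t
        = ∫ u, ((Ioi (0:ℝ)).indicator fun u => α * Real.exp (-β * u)) u * θ (t - u) := by
      rw [convolution_def]; simp only [ContinuousLinearMap.mul_apply']
    have c2 : convolution ((Ioi (0:ℝ)).indicator fun u => α * Real.exp (-β * u))
        (convolution ((Ioi (0:ℝ)).indicator fun u => α * Real.exp ((α - β) * u)) θ
          (ContinuousLinearMap.mul ℝ ℝ) volume)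
        (ContinuousLinearMap.mul ℝ ℝ) volume t
        = ∫ u, ((Ioi (0:ℝ)).indicator fun u => α * Real.exp (-β * u)) u *
            (convolution ((Ioi (0:ℝ)).indicator fun u => α * Real.exp ((α - β) * u)) θ
              (ContinuousLinearMap.mul ℝ ℝ) volume) (t - u) := by
      rw [convolution_def]; simp only [ContinuousLinearMap.mul_apply']
    -- associativity
    have hassoc := convolution_assoc (ContinuousLinearMap.mul ℝ ℝ) (ContinuousLinearMap.mul ℝ ℝ)
      (ContinuousLinearMap.mul ℝ ℝ) (ContinuousLinearMap.mul ℝ ℝ)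
      (fun x y z => by simp only [ContinuousLinearMap.mul_apply']; ring)
      (x₀ := t)
      hK_int.aestronglyMeasurable hGf_int.aestronglyMeasurable hθ.aestronglyMeasurable
      (hK_int.ae_convolution_exists (ContinuousLinearMap.mul ℝ ℝ) hGf_int)
      (Filter.Eventually.of_forall fun x => holder_cea hGf2.norm hθ.norm x)
      (holder_cea hK2.norm (young_conv hGf_int.norm hθ.norm) t)
    -- compute (K ⋆ Gf) ⋆ θ at t
    have hKG := convKG α β
    have step4 : convolution
        (convolution ((Ioi (0:ℝ)).indicator fun u => α * Real.exp (-β * u))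
          ((Ioi (0:ℝ)).indicator fun u => α * Real.exp ((α - β) * u))
          (ContinuousLinearMap.mul ℝ ℝ) volume) θ (ContinuousLinearMap.mul ℝ ℝ) volume t
        = (∫ u, ((Ioi (0:ℝ)).indicator fun u => α * Real.exp ((α - β) * u)) u * θ (t - u))
          - ∫ u, ((Ioi (0:ℝ)).indicator fun u => α * Real.exp (-β * u)) u * θ (t - u) := by
      rw [hKG, convolution_def]
      simp only [ContinuousLinearMap.mul_apply']
      have hsm : ∀ u : ℝ, (((Ioi (0:ℝ)).indicator fun u => α * Real.exp ((α - β) * u)) u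
            - ((Ioi (0:ℝ)).indicator fun u => α * Real.exp (-β * u)) u) * θ (t - u)
          = ((Ioi (0:ℝ)).indicator fun u => α * Real.exp ((α - β) * u)) u * θ (t - u)
            - ((Ioi (0:ℝ)).indicator fun u => α * Real.exp (-β * u)) u * θ (t - u) :=
        fun u => sub_mul _ _ _
      simp only [hsm]
      exact integral_sub i3 i1
    rw [hψdef t, step1, step2, ← c1, ← c2, ← hassoc, step4, ← c1, hFeq' t, convolution_def]
    simp only [ContinuousLinearMap.mul_apply']
    ring
end
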